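/- Let (X,Σ,μ) be a measure space, 1 ≤ p < ∞, and let 𝓕 ⊆ Λ^p(X). Then lim_{M→∞} sup_{f∈𝓕} ν_p(f − T_M f) = 0 if and only if 𝓕 is almost equibounded, i.e., lim_{M→∞} sup_{f∈𝓕} μ({x : |f(x)| > M}) = 0. -/

import Mathlib

open MeasureTheory ENNReal Filter Topology

/-- The F-norm `ν_p(g) = (∫ min(|g|,1)^p dμ)^{1/p}` of the asymptotic `L_p` space. -/
noncomputable def nuF {X : Type*} [MeasurableSpace X] (μ : Measure X) (p : ℝ) (g : X → ℝ) :
    ℝ≥0∞ :=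
  (∫⁻ x, ENNReal.ofReal (min |g x| 1 ^ p) ∂μ) ^ (1 / p)

/-- The `L^p` norm `(∫ |g|^p dμ)^{1/p}`. -/
noncomputable def lpNorm {X : Type*} [MeasurableSpace X] (μ : Measure X) (p : ℝ) (g : X → ℝ) :
    ℝ≥0∞ :=
  (∫⁻ x, ENNReal.ofReal (|g x| ^ p) ∂μ) ^ (1 / p)

/-- Membership in the asymptotic `L_p` space `Λ^p(X)`. -/
def MemLambda {X : Type*} [MeasurableSpace X] (μ : Measure X) (p : ℝ) (f : X → ℝ) : Prop :=
  Measurable f ∧ ∫⁻ x, ENNReal.ofReal (min |f x| 1 ^ p) ∂μ < ⊤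

/-- Membership in `L^p(X)`. -/
def MemLp' {X : Type*} [MeasurableSpace X] (μ : Measure X) (p : ℝ) (f : X → ℝ) : Prop :=
  Measurable f ∧ ∫⁻ x, ENNReal.ofReal (|f x| ^ p) ∂μ < ⊤

/-- The truncation map `T_M(t) = max(-M, min(t, M))`. -/
def trunc (M : ℝ) (t : ℝ) : ℝ := max (-M) (min t M)

/-- A family `F` is totally bounded with respect to a distance `d` if for every `ε > 0`
there are finitely many functions such that every `f ∈ F` is within `ε` of one of them. -/
def TotallyBoundedDist {X : Type*} (d : (X → ℝ) → (X → ℝ) → ℝ≥0∞) (F : Set (X → ℝ)) : Prop :=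
  ∀ ε : ℝ≥0∞, 0 < ε → ∃ G : Finset (X → ℝ), ∀ f ∈ F, ∃ g ∈ G, d f g < ε
lemma trunc_sub_eq_zero {M t : ℝ} (h : |t| ≤ M) : t - trunc M t = 0 := by
  rw [abs_le] at h
  simp [trunc, min_eq_left h.2, max_eq_right h.1]

lemma one_le_abs_sub_trunc {M t : ℝ} (hM : 0 ≤ M) (h : M + 1 < |t|) :
    1 ≤ |t - trunc M t| := by
  rcases abs_cases t with ⟨ht, _⟩ | ⟨ht, htneg⟩
  · have h1 : M + 1 < t := by rw [ht] at h; exact h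
    have : trunc M t = M := by
      rw [trunc, min_eq_right (by linarith), max_eq_right (by linarith)]
    rw [this, le_abs]; left; linarith
  · have h1 : t < -(M + 1) := by rw [ht] at h; linarith
    have : trunc M t = -M := by
      rw [trunc, min_eq_left (by linarith), max_eq_left (by linarith)]
    rw [this, le_abs]; right; linarith

lemma integral_le {X : Type*} [MeasurableSpace X] (μ : Measure X) {p : ℝ} (hp : 1 ≤ p)
    {f : X → ℝ} (hf : Measurable f) {M : ℝ} :
    ∫⁻ x, ENNReal.ofReal (min |(f - trunc M ∘ f) x| 1 ^ p) ∂μ ≤ μ {x | M < |f x|} := by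
  have hs : MeasurableSet {x | M < |f x|} := measurableSet_lt measurable_const hf.abs
  rw [← lintegral_indicator_one hs]
  refine lintegral_mono fun x => ?_
  by_cases hx : M < |f x|
  · simp only [Set.indicator_apply, Set.mem_setOf_eq, if_pos hx, Pi.one_apply]
    refine ENNReal.ofReal_le_one.mpr (Real.rpow_le_one ?_ ?_ (by linarith))
    · exact le_min (abs_nonneg _) zero_le_one
    · exact min_le_right _ _
  · simp only [Set.indicator_apply, Set.mem_setOf_eq, if_neg hx]
    have : (f - trunc M ∘ f) x = 0 := trunc_sub_eq_zero (not_lt.mp hx)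
    simp [this, Real.zero_rpow (by linarith : p ≠ 0)]

lemma le_integral {X : Type*} [MeasurableSpace X] (μ : Measure X) {p : ℝ} (hp : 1 ≤ p)
    {f : X → ℝ} (hf : Measurable f) {M : ℝ} (hM : 0 ≤ M) :
    μ {x | M + 1 < |f x|} ≤ ∫⁻ x, ENNReal.ofReal (min |(f - trunc M ∘ f) x| 1 ^ p) ∂μ := by
  have hs : MeasurableSet {x | M + 1 < |f x|} := measurableSet_lt measurable_const hf.abs
  rw [← lintegral_indicator_one hs]
  refine lintegral_mono fun x => ?_
  by_cases hx : M + 1 < |f x|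
  · simp only [Set.indicator_apply, Set.mem_setOf_eq, if_pos hx, Pi.one_apply]
    have h1 : (1 : ℝ) ≤ |(f - trunc M ∘ f) x| := one_le_abs_sub_trunc hM hx
    rw [min_eq_right h1, Real.one_rpow, ENNReal.ofReal_one]
  · simp only [Set.indicator_apply, Set.mem_setOf_eq, if_neg hx]; exact zero_le

theorem stmt14 {X : Type*} [MeasurableSpace X] (μ : Measure X) (p : ℝ) (hp : 1 ≤ p)
    (F : Set (X → ℝ)) (hF : ∀ f ∈ F, MemLambda μ p f) :
    Tendsto (fun M : ℝ => ⨆ f ∈ F, nuF μ p (f - trunc M ∘ f)) atTop (𝓝 0) ↔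
      Tendsto (fun M : ℝ => ⨆ f ∈ F, μ {x | M < |f x|}) atTop (𝓝 0) := by
  have hp0 : p ≠ 0 := by linarith
  have hp0' : (0:ℝ) < p := by linarith
  constructor
  · intro H
    rw [ENNReal.tendsto_nhds_zero] at H ⊢
    intro ε hε
    rcases eq_or_ne ε ⊤ with rfl | hεtop
    · exact Eventually.of_forall fun _ => le_top
    have hε' : 0 < ε ^ (1 / p) := ENNReal.rpow_pos hε hεtop
    obtain ⟨a, ha⟩ := (H _ hε').exists_forall_of_atTop
    rw [eventually_atTop]
    refine ⟨max a 0 + 1, fun M hM => ?_⟩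
    have hM1 : a ≤ M - 1 := by
      have := le_max_left a 0; linarith
    have hM0 : (0:ℝ) ≤ M - 1 := by
      have := le_max_right a 0; linarith
    refine iSup₂_le fun f hf => ?_
    have hmeas := (hF f hf).1
    calc μ {x | M < |f x|} = μ {x | (M - 1) + 1 < |f x|} := by norm_num
      _ ≤ ∫⁻ x, ENNReal.ofReal (min |(f - trunc (M-1) ∘ f) x| 1 ^ p) ∂μ :=
          le_integral μ hp hmeas hM0
      _ = (nuF μ p (f - trunc (M-1) ∘ f)) ^ p := by
          rw [nuF, ← ENNReal.rpow_mul, one_div_mul_cancel hp0, ENNReal.rpow_one]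
      _ ≤ (⨆ g ∈ F, nuF μ p (g - trunc (M-1) ∘ g)) ^ p := by
          gcongr
          exact le_iSup₂_of_le f hf le_rfl
      _ ≤ (ε ^ (1/p)) ^ p := by gcongr; exact ha (M-1) hM1
      _ = ε := by rw [← ENNReal.rpow_mul, one_div_mul_cancel hp0, ENNReal.rpow_one]
  · intro H
    rw [ENNReal.tendsto_nhds_zero] at H ⊢
    intro ε hε
    rcases eq_or_ne ε ⊤ with rfl | hεtop
    · exact Eventually.of_forall fun _ => le_top
    have hε' : 0 < ε ^ p := ENNReal.rpow_pos hε hεtop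
    obtain ⟨a, ha⟩ := (H _ hε').exists_forall_of_atTop
    rw [eventually_atTop]
    refine ⟨max a 0, fun M hM => ?_⟩
    refine iSup₂_le fun f hf => ?_
    have hmeas := (hF f hf).1
    calc nuF μ p (f - trunc M ∘ f)
        ≤ (μ {x | M < |f x|}) ^ (1/p) := by
          rw [nuF]
          exact ENNReal.rpow_le_rpow (integral_le μ hp hmeas) (one_div_nonneg.mpr hp0'.le)
      _ ≤ (⨆ g ∈ F, μ {x | M < |g x|}) ^ (1/p) := by
          gcongr
          exact le_iSup₂_of_le f hf le_rfl
      _ ≤ (ε ^ p) ^ (1/p) := by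
          gcongr
          exact ha M (le_trans (le_max_left a 0) hM)
      _ = ε := by rw [← ENNReal.rpow_mul, mul_one_div_cancel hp0, ENNReal.rpow_one]
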